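/- If $(z_j)$ is a sequence in the open unit disk $\mathbb{D}$ satisfying the Blaschke condition $\sum_{j=1}^{\infty}(1-|z_j|) < \infty$, then there exists a non-constant analytic function $f : \mathbb{D} \to \overline{\mathbb{D}}$ whose zero set is exactly $(z_j)$ (with multiplicities). -/

import Mathlib

open Metric Set Filter

section BlaschkeHelpers
open Complex Topology

noncomputable def Complex.abs : AbsoluteValue ℂ ℝ := NormedField.toAbsoluteValue ℂ

@[simp] lemma Complex.norm_eq_abs (z : ℂ) : ‖z‖ = Complex.abs z := rfl

lemma Complex.abs_apply (z : ℂ) : Complex.abs z = Real.sqrt (Complex.normSq z) := rfl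

@[simp] lemma Complex.abs_conj (z : ℂ) : Complex.abs ((starRingEnd ℂ) z) = Complex.abs z :=
  Complex.norm_conj z

@[simp] lemma Complex.abs_ofReal (x : ℝ) : Complex.abs (x : ℂ) = |x| := Complex.norm_real x

lemma Complex.sq_abs (z : ℂ) : Complex.abs z ^ 2 = Complex.normSq z := Complex.sq_norm z

noncomputable def blc (a : ℂ) : ℂ := if a = 0 then -1 else (Complex.abs a : ℂ) / a

noncomputable def bl (a u : ℂ) : ℂ := blc a * (a - u) / (1 - (starRingEnd ℂ) a * u)

lemma blc_ne_zero (a : ℂ) : blc a ≠ 0 := by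
  unfold blc
  split_ifs with h
  · norm_num
  · exact div_ne_zero (by simpa [Complex.abs.ne_zero_iff] using h) h

lemma abs_blc (a : ℂ) : Complex.abs (blc a) = 1 := by
  unfold blc
  split_ifs with h
  · simp
  · rw [map_div₀, Complex.abs_ofReal, _root_.abs_of_nonneg (Complex.abs.nonneg a)]
    exact div_self (by simpa [Complex.abs.ne_zero_iff] using h)

lemma bl_den_ne_zero {a u : ℂ} (ha : Complex.abs a ≤ 1) (hu : Complex.abs u < 1) :
    1 - (starRingEnd ℂ) a * u ≠ 0 := by
  intro h
  have h2 : (1:ℂ) = (starRingEnd ℂ) a * u := by linear_combination h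
  have : Complex.abs ((starRingEnd ℂ) a * u) < 1 := by
    rw [map_mul, Complex.abs_conj]
    calc Complex.abs a * Complex.abs u ≤ 1 * Complex.abs u := by
          gcongr
      _ < 1 := by simpa using hu
  rw [← h2] at this
  simp at this

lemma abs_bl_le {a u : ℂ} (ha : Complex.abs a ≤ 1) (hu : Complex.abs u < 1) :
    Complex.abs (bl a u) ≤ 1 := by
  have hden := bl_den_ne_zero ha hu
  have key : Complex.normSq (a - u) ≤ Complex.normSq (1 - (starRingEnd ℂ) a * u) := by
    have hid : ((Complex.normSq (1 - (starRingEnd ℂ) a * u) : ℂ))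
        - (Complex.normSq (a - u) : ℂ)
        = ((1 : ℂ) - Complex.normSq a) * (1 - Complex.normSq u) := by
      rw [← Complex.mul_conj, ← Complex.mul_conj, ← Complex.mul_conj, ← Complex.mul_conj]
      simp only [map_sub, map_mul, map_one, Complex.conj_conj]
      ring
    have h1 : Complex.normSq a ≤ 1 := by
      rw [← Complex.sq_abs] ; nlinarith [Complex.abs.nonneg a]
    have h2 : Complex.normSq u ≤ 1 := by
      rw [← Complex.sq_abs] ; nlinarith [Complex.abs.nonneg u]
    have := congrArg Complex.re hid
    simp only [Complex.sub_re, Complex.ofReal_re, Complex.mul_re, Complex.sub_im,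
      Complex.ofReal_im, Complex.one_re, Complex.one_im] at this
    nlinarith
  unfold bl
  rw [map_div₀, map_mul, abs_blc, one_mul, div_le_one (Complex.abs.pos hden)]
  rw [Complex.abs_apply, Complex.abs_apply]
  exact Real.sqrt_le_sqrt key

lemma bl_eq_zero_iff {a u : ℂ} (ha : Complex.abs a ≤ 1) (hu : Complex.abs u < 1) :
    bl a u = 0 ↔ u = a := by
  unfold bl
  rw [div_eq_zero_iff, mul_eq_zero]
  constructor
  · rintro ((h | h) | h)
    · exact absurd h (blc_ne_zero a)
    · linear_combination -h
    · exact absurd h (bl_den_ne_zero ha hu)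
  · intro h; left; right; rw [h]; ring

lemma bl_differentiableAt {a u : ℂ} (ha : Complex.abs a ≤ 1) (hu : Complex.abs u < 1) :
    DifferentiableAt ℂ (bl a) u := by
  apply DifferentiableAt.div
  · exact (differentiableAt_const _).mul ((differentiableAt_const _).sub differentiableAt_id)
  · exact (differentiableAt_const _).sub ((differentiableAt_const _).mul differentiableAt_id)
  · exact bl_den_ne_zero ha hu

lemma bl_analyticAt {a u : ℂ} (ha : Complex.abs a ≤ 1) (hu : Complex.abs u < 1) :
    AnalyticAt ℂ (bl a) u := by
  apply AnalyticAt.div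
  · exact (analyticAt_const).mul (analyticAt_const.sub analyticAt_id)
  · exact analyticAt_const.sub (analyticAt_const.mul analyticAt_id)
  · exact bl_den_ne_zero ha hu

lemma one_sub_bl_bound {a u : ℂ} {r : ℝ} (ha : Complex.abs a < 1) (hr : r < 1)
    (hu : Complex.abs u ≤ r) :
    Complex.abs (1 - bl a u) ≤ (1 + r) / (1 - r) * (1 - Complex.abs a) := by
  have hr0 : 0 ≤ r := le_trans (Complex.abs.nonneg u) hu
  have hu1 : Complex.abs u < 1 := lt_of_le_of_lt hu hr
  have hden := bl_den_ne_zero ha.le hu1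
  have habden : 1 - r ≤ Complex.abs (1 - (starRingEnd ℂ) a * u) := by
    have h1 : Complex.abs ((starRingEnd ℂ) a * u) ≤ r := by
      rw [map_mul, Complex.abs_conj]
      calc Complex.abs a * Complex.abs u ≤ 1 * r := by
            apply mul_le_mul ha.le hu (Complex.abs.nonneg u) zero_le_one
        _ = r := one_mul r
    calc 1 - r ≤ 1 - Complex.abs ((starRingEnd ℂ) a * u) := by linarith
      _ ≤ Complex.abs (1 - (starRingEnd ℂ) a * u) := by
          simpa using norm_sub_norm_le (1:ℂ) ((starRingEnd ℂ) a * u)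
  rcases eq_or_ne a 0 with rfl | ha0
  · have : bl 0 u = u := by unfold bl blc; simp
    rw [this]
    simp only [map_zero, sub_zero, mul_one]
    calc Complex.abs (1 - u) ≤ Complex.abs 1 + Complex.abs u := by
          simpa using Complex.abs.sub_le_add 1 u
      _ ≤ 1 + r := by simp [hu]
      _ ≤ (1 + r) / (1 - r) := by
          rw [le_div_iff₀ (by linarith)]
          nlinarith
  · -- identity : (1 - bl a u) = (1 - |a|) * (a + |a| * u) / (a * (1 - conj a * u))
    have hs : ((Complex.abs a : ℂ)) * ((Complex.abs a : ℂ)) = a * (starRingEnd ℂ) a := by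
      rw [Complex.mul_conj]; norm_cast; rw [← Complex.sq_abs a]; ring
    have hid : 1 - bl a u
        = (1 - (Complex.abs a : ℂ)) * (a + (Complex.abs a : ℂ) * u)
          / (a * (1 - (starRingEnd ℂ) a * u)) := by
      unfold bl blc
      rw [if_neg ha0]
      have hden' : 1 - u * (starRingEnd ℂ) a ≠ 0 := by rwa [mul_comm]
      field_simp
      linear_combination u * hs
    rw [hid, map_div₀, map_mul, map_mul]
    have habs0 : 0 < Complex.abs a := Complex.abs.pos ha0
    have h1 : Complex.abs (1 - (Complex.abs a : ℂ)) = 1 - Complex.abs a := by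
      rw [← Complex.ofReal_one, ← Complex.ofReal_sub, Complex.abs_ofReal]
      exact _root_.abs_of_nonneg (by linarith)
    have h2 : Complex.abs (a + (Complex.abs a : ℂ) * u) ≤ Complex.abs a * (1 + r) := by
      calc Complex.abs (a + (Complex.abs a : ℂ) * u)
          ≤ Complex.abs a + Complex.abs ((Complex.abs a : ℂ) * u) := Complex.abs.add_le _ _
        _ = Complex.abs a + Complex.abs a * Complex.abs u := by
            rw [map_mul, Complex.abs_ofReal, _root_.abs_of_nonneg (Complex.abs.nonneg a)]
        _ ≤ Complex.abs a + Complex.abs a * r := by nlinarith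
        _ = Complex.abs a * (1 + r) := by ring
    rw [h1, div_le_iff₀ (mul_pos habs0 (Complex.abs.pos hden))]
    calc (1 - Complex.abs a) * Complex.abs (a + (Complex.abs a : ℂ) * u)
        ≤ (1 - Complex.abs a) * (Complex.abs a * (1 + r)) := by nlinarith
      _ = (1 + r) / (1 - r) * (1 - Complex.abs a) * (Complex.abs a * (1 - r)) := by
          have h1r : (1:ℝ) - r ≠ 0 := by linarith
          field_simp
      _ ≤ (1 + r) / (1 - r) * (1 - Complex.abs a)
          * (Complex.abs a * Complex.abs (1 - (starRingEnd ℂ) a * u)) := by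
          have hq : 0 ≤ (1 + r) / (1 - r) * (1 - Complex.abs a) := by
            apply mul_nonneg (div_nonneg (by linarith) (by linarith)) (by linarith)
          apply mul_le_mul_of_nonneg_left _ hq
          exact mul_le_mul_of_nonneg_left habden habs0.le

lemma key (z : ℕ → ℂ) (hz : ∀ j, Complex.abs (z j) < 1)
    (hB : Summable fun j => 1 - Complex.abs (z j)) {r : ℝ} (hr : r < 1) :
    ∃ N : ℕ, ∃ S : ℂ → ℂ,
      DifferentiableOn ℂ S (ball (0:ℂ) r) ∧
      (∀ u ∈ ball (0:ℂ) r, ∀ j, N ≤ j → bl (z j) u ≠ 0) ∧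
      (∀ u ∈ ball (0:ℂ) r,
        Tendsto (fun n => ∏ j ∈ Finset.range n, bl (z j) u) atTop
          (𝓝 ((∏ j ∈ Finset.range N, bl (z j) u) * Complex.exp (S u)))) := by
  set a : ℕ → ℝ := fun j => 1 - Complex.abs (z j) with ha_def
  have ha_pos : ∀ j, 0 < a j := fun j => by simp [ha_def, hz j]
  rcases le_or_gt r 0 with hr0 | hr0
  · refine ⟨0, 0, ?_, ?_, ?_⟩ <;>
      simp [Metric.ball_eq_empty.mpr hr0, DifferentiableOn]
  -- choose N
  have hC : (0:ℝ) < (1 + r) / (1 - r) := div_pos (by linarith) (by linarith)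
  set C : ℝ := (1 + r) / (1 - r) with hC_def
  obtain ⟨N, hN⟩ : ∃ N, ∑' k, a (k + N) < 1 / (2 * C) := by
    have := _root_.tendsto_sum_nat_add a
    have hpos2 : (0:ℝ) < 1 / (2 * C) := by
      rw [one_div]; exact inv_pos.mpr (by linarith)
    have h2 := this.eventually (eventually_lt_nhds hpos2)
    exact h2.exists
  have htail : Summable (fun k => a (k + N)) := (summable_nat_add_iff N).mpr hB
  -- uniform bounds on the ball
  have hb1 : ∀ u ∈ ball (0:ℂ) r, ∀ k : ℕ,
      Complex.abs (1 - bl (z (k + N)) u) ≤ C * a (k + N) := by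
    intro u hu k
    rw [mem_ball_zero_iff] at hu
    exact one_sub_bl_bound (hz _) hr (le_of_lt hu)
  have hb2 : ∀ k : ℕ, C * a (k + N) ≤ 1 / 2 := by
    intro k
    have h1 : a (k + N) ≤ ∑' k, a (k + N) := Summable.le_tsum htail k (fun j _ => (ha_pos _).le)
    have h2 : a (k + N) ≤ 1 / (2 * C) := le_of_lt (lt_of_le_of_lt h1 hN)
    calc C * a (k + N) ≤ C * (1 / (2 * C)) := by nlinarith
      _ = 1 / 2 := by field_simp
  have hhalf : ∀ u ∈ ball (0:ℂ) r, ∀ k : ℕ,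
      Complex.abs (bl (z (k + N)) u - 1) ≤ 1 / 2 := by
    intro u hu k
    calc Complex.abs (bl (z (k + N)) u - 1) = Complex.abs (1 - bl (z (k + N)) u) :=
          Complex.abs.map_sub _ _
      _ ≤ C * a (k + N) := hb1 u hu k
      _ ≤ 1 / 2 := hb2 k
  have hne : ∀ u ∈ ball (0:ℂ) r, ∀ k : ℕ, bl (z (k + N)) u ≠ 0 := by
    intro u hu k h
    have := hhalf u hu k
    rw [h] at this
    simp at this
    linarith
  have hslit : ∀ u ∈ ball (0:ℂ) r, ∀ k : ℕ, bl (z (k + N)) u ∈ Complex.slitPlane := by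
    intro u hu k
    have : bl (z (k + N)) u = 1 + (bl (z (k + N)) u - 1) := by ring
    rw [this]
    apply Complex.mem_slitPlane_of_norm_lt_one
    calc ‖bl (z (k + N)) u - 1‖ ≤ 1 / 2 := hhalf u hu k
      _ < 1 := by norm_num
  have hlogbound : ∀ u ∈ ball (0:ℂ) r, ∀ k : ℕ,
      ‖Complex.log (bl (z (k + N)) u)‖ ≤ (3/2) * (C * a (k + N)) := by
    intro u hu k
    have h4 : ‖bl (z (k + N)) u - 1‖ ≤ 1/2 := hhalf u hu k
    have h5 := Complex.norm_log_one_add_half_le_self h4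
    have h6 : (1 : ℂ) + (bl (z (k + N)) u - 1) = bl (z (k + N)) u := by ring
    rw [h6] at h5
    have h7 : ‖bl (z (k + N)) u - 1‖ ≤ C * a (k + N) := by
      calc ‖bl (z (k + N)) u - 1‖ = Complex.abs (1 - bl (z (k + N)) u) := by
            rw [Complex.norm_eq_abs, Complex.abs.map_sub]
        _ ≤ _ := hb1 u hu k
    calc ‖Complex.log (bl (z (k + N)) u)‖ ≤ 3/2 * ‖bl (z (k + N)) u - 1‖ := h5
      _ ≤ 3/2 * (C * a (k + N)) := mul_le_mul_of_nonneg_left h7 (by norm_num)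
  set S : ℂ → ℂ := fun u => ∑' k, Complex.log (bl (z (k + N)) u) with hS_def
  have hbound_summable : Summable (fun k => (3/2) * (C * a (k + N))) :=
    (htail.mul_left C).mul_left (3/2)
  have hSdiff : DifferentiableOn ℂ S (ball (0:ℂ) r) := by
    apply differentiableOn_tsum_of_summable_norm hbound_summable
    · intro k
      intro u hu
      rw [mem_ball_zero_iff] at hu
      have hu1 : Complex.abs u < 1 := lt_trans hu hr
      apply DifferentiableAt.differentiableWithinAt
      exact (Complex.differentiableAt_log (hslit u (by rwa [mem_ball_zero_iff]) k)).comp u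
        (bl_differentiableAt (hz _).le hu1)
    · exact isOpen_ball
    · intro k w hw
      exact hlogbound w hw k
  refine ⟨N, S, hSdiff, ?_, ?_⟩
  · intro u hu j hj
    have : j = (j - N) + N := by omega
    rw [this]
    exact hne u hu (j - N)
  · intro u hu
    have hu1 : Complex.abs u < 1 := by
      rw [mem_ball_zero_iff] at hu; exact lt_trans hu hr
    have hsum : Summable (fun k => Complex.log (bl (z (k + N)) u)) := by
      apply Summable.of_norm_bounded hbound_summable
      intro k; exact hlogbound u hu k
    have htendsto_sum : Tendsto (fun n => ∑ k ∈ Finset.range n, Complex.log (bl (z (k + N)) u))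
        atTop (𝓝 (S u)) := hsum.hasSum.tendsto_sum_nat
    have htendsto_exp : Tendsto
        (fun n => Complex.exp (∑ k ∈ Finset.range n, Complex.log (bl (z (k + N)) u)))
        atTop (𝓝 (Complex.exp (S u))) :=
      (Complex.continuous_exp.continuousAt.tendsto).comp htendsto_sum
    have hprod_eq : ∀ n, (∏ k ∈ Finset.range n, bl (z (k + N)) u)
        = Complex.exp (∑ k ∈ Finset.range n, Complex.log (bl (z (k + N)) u)) := by
      intro n
      rw [Complex.exp_sum]
      apply Finset.prod_congr rfl
      intro k _
      rw [Complex.exp_log (hne u hu k)]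
    have htendsto_tail : Tendsto (fun n => ∏ k ∈ Finset.range n, bl (z (k + N)) u)
        atTop (𝓝 (Complex.exp (S u))) := by
      simp_rw [hprod_eq]; exact htendsto_exp
    have hshift : ∀ n, (∏ j ∈ Finset.range (N + n), bl (z j) u)
        = (∏ j ∈ Finset.range N, bl (z j) u) * ∏ k ∈ Finset.range n, bl (z (k + N)) u := by
      intro n
      rw [Finset.prod_range_add]
      congr 1
      apply Finset.prod_congr rfl
      intro k _
      rw [add_comm]
    rw [← tendsto_add_atTop_iff_nat N]
    have : (fun n => ∏ j ∈ Finset.range (n + N), bl (z j) u)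
        = fun n => (∏ j ∈ Finset.range N, bl (z j) u) * ∏ k ∈ Finset.range n, bl (z (k + N)) u := by
      funext n
      rw [add_comm n N, hshift n]
    rw [this]
    exact (htendsto_tail.const_mul _)

theorem stmt_0 (z : ℕ → ℂ) (hz : ∀ j, z j ∈ ball (0:ℂ) 1)
    (hB : Summable fun j => 1 - ‖z j‖) :
    ∃ f : ℂ → ℂ, DifferentiableOn ℂ f (ball 0 1) ∧
      MapsTo f (ball 0 1) (closedBall 0 1) ∧
      (∃ z₁ ∈ ball (0:ℂ) 1, ∃ z₂ ∈ ball (0:ℂ) 1, f z₁ ≠ f z₂) ∧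
      ∀ w ∈ ball (0:ℂ) 1, ∃ g : ℂ → ℂ, AnalyticAt ℂ g w ∧ g w ≠ 0 ∧
        ∀ᶠ u in nhds w, f u = (u - w) ^ ({j | z j = w}.ncard) * g u := by
  have hz' : ∀ j, Complex.abs (z j) < 1 := fun j => by
    have := hz j
    rwa [mem_ball_zero_iff, Complex.norm_eq_abs] at this
  set f : ℂ → ℂ := fun u => limUnder atTop (fun n => ∏ j ∈ Finset.range n, bl (z j) u)
    with hf_def
  -- local representation
  have hrep : ∀ w ∈ ball (0:ℂ) 1, ∃ r : ℝ, w ∈ ball (0:ℂ) r ∧ r < 1 ∧ ∃ N : ℕ, ∃ S : ℂ → ℂ,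
      DifferentiableOn ℂ S (ball (0:ℂ) r) ∧
      (∀ u ∈ ball (0:ℂ) r, ∀ j, N ≤ j → bl (z j) u ≠ 0) ∧
      (∀ u ∈ ball (0:ℂ) r,
        Tendsto (fun n => ∏ j ∈ Finset.range n, bl (z j) u) atTop
          (𝓝 ((∏ j ∈ Finset.range N, bl (z j) u) * Complex.exp (S u)))) ∧
      (∀ u ∈ ball (0:ℂ) r,
        f u = (∏ j ∈ Finset.range N, bl (z j) u) * Complex.exp (S u)) := by
    intro w hw
    rw [mem_ball_zero_iff] at hw
    set r : ℝ := (‖w‖ + 1) / 2 with hr_def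
    have hwr : ‖w‖ < r := by rw [hr_def]; linarith
    have hr1 : r < 1 := by rw [hr_def]; linarith [norm_nonneg w]
    obtain ⟨N, S, hSdiff, hne, htendsto⟩ := key z hz' hB hr1
    exact ⟨r, mem_ball_zero_iff.mpr hwr, hr1, N, S, hSdiff, hne, htendsto,
      fun u hu => (htendsto u hu).limUnder_eq⟩
  -- differentiability
  have hdiff : DifferentiableOn ℂ f (ball (0:ℂ) 1) := by
    intro u0 hu0
    obtain ⟨r, hu0r, hr1, N, S, hSdiff, hne, htendsto, heq⟩ := hrep u0 hu0
    have hhd : DifferentiableOn ℂ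
        (fun u => (∏ j ∈ Finset.range N, bl (z j) u) * Complex.exp (S u)) (ball 0 r) := by
      apply DifferentiableOn.mul _ hSdiff.cexp
      intro u hu
      apply DifferentiableAt.differentiableWithinAt
      apply DifferentiableAt.fun_finsetProd
      intro j _
      rw [mem_ball_zero_iff] at hu
      exact bl_differentiableAt (hz' j).le (by rw [← Complex.norm_eq_abs]; exact hu.trans hr1)
    have hfd : DifferentiableAt ℂ f u0 := by
      have h1 : DifferentiableAt ℂ
          (fun u => (∏ j ∈ Finset.range N, bl (z j) u) * Complex.exp (S u)) u0 :=
        hhd.differentiableAt (isOpen_ball.mem_nhds hu0r)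
      apply h1.congr_of_eventuallyEq
      filter_upwards [isOpen_ball.mem_nhds hu0r] with u hu
      exact heq u hu
    exact hfd.differentiableWithinAt
  -- maps to closed ball
  have hmaps : MapsTo f (ball (0:ℂ) 1) (closedBall 0 1) := by
    intro u hu
    obtain ⟨r, hur, hr1, N, S, hSdiff, hne, htendsto, heq⟩ := hrep u hu
    have ht : Tendsto (fun n => ∏ j ∈ Finset.range n, bl (z j) u) atTop (𝓝 (f u)) := by
      rw [heq u hur]; exact htendsto u hur
    rw [mem_closedBall_zero_iff]
    apply le_of_tendsto ht.norm
    apply Eventually.of_forall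
    intro n
    rw [Complex.norm_eq_abs, Complex.abs.map_prod]
    apply Finset.prod_le_one
    · intro j _; exact Complex.abs.nonneg _
    · intro j _
      rw [mem_ball_zero_iff, Complex.norm_eq_abs] at hu
      exact abs_bl_le (hz' j).le hu
  -- zero order structure
  have horder : ∀ w ∈ ball (0:ℂ) 1, ∃ g : ℂ → ℂ, AnalyticAt ℂ g w ∧ g w ≠ 0 ∧
      ∀ᶠ u in nhds w, f u = (u - w) ^ ({j | z j = w}.ncard) * g u := by
    intro w hw
    have hw1 : Complex.abs w < 1 := by
      rw [mem_ball_zero_iff, Complex.norm_eq_abs] at hw; exact hw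
    obtain ⟨r, hwr, hr1, N, S, hSdiff, hne, htendsto, heq⟩ := hrep w hw
    set F : Finset ℕ := (Finset.range N).filter (fun j => z j = w) with hF_def
    have hFsub : F ⊆ Finset.range N := Finset.filter_subset _ _
    have hset : {j | z j = w} = (F : Set ℕ) := by
      ext j
      simp only [mem_setOf_eq, Finset.coe_filter, Finset.mem_range, hF_def, mem_setOf_eq]
      constructor
      · intro hj
        refine ⟨?_, hj⟩
        by_contra hjN
        push_neg at hjN
        have := hne w hwr j hjN
        rw [hj] at this
        exact this ((bl_eq_zero_iff hw1.le hw1).mpr rfl)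
      · exact fun h => h.2
    have hm : {j | z j = w}.ncard = F.card := by rw [hset, Set.ncard_coe_finset]
    set e : ℂ → ℂ := fun u => -(blc w) / (1 - (starRingEnd ℂ) w * u) with he_def
    have hble : ∀ u : ℂ, bl w u = (u - w) * e u := by
      intro u; unfold bl; rw [he_def]; ring
    set g : ℂ → ℂ := fun u =>
      (e u) ^ F.card * (∏ j ∈ Finset.range N \ F, bl (z j) u) * Complex.exp (S u) with hg_def
    have hden_w := bl_den_ne_zero hw1.le hw1
    refine ⟨g, ?_, ?_, ?_⟩
    · -- analytic at w
      have hgdiff : DifferentiableOn ℂ g (ball 0 r) := by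
        apply DifferentiableOn.mul _ hSdiff.cexp
        apply DifferentiableOn.mul
        · apply DifferentiableOn.pow
          intro u hu
          apply DifferentiableAt.differentiableWithinAt
          apply DifferentiableAt.div (differentiableAt_const _)
          · exact (differentiableAt_const _).sub ((differentiableAt_const _).mul
              differentiableAt_id)
          · rw [mem_ball_zero_iff] at hu
            exact bl_den_ne_zero hw1.le (by rw [← Complex.norm_eq_abs]; exact hu.trans hr1)
        · intro u hu
          apply DifferentiableAt.differentiableWithinAt
          apply DifferentiableAt.fun_finsetProd
          intro j _
          rw [mem_ball_zero_iff] at hu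
          exact bl_differentiableAt (hz' j).le (by rw [← Complex.norm_eq_abs]; exact hu.trans hr1)
      exact hgdiff.analyticAt (isOpen_ball.mem_nhds hwr)
    · -- nonzero at w
      rw [hg_def]
      apply mul_ne_zero (mul_ne_zero _ _) (Complex.exp_ne_zero _)
      · apply pow_ne_zero
        exact div_ne_zero (neg_ne_zero.mpr (blc_ne_zero w)) hden_w
      · rw [Finset.prod_ne_zero_iff]
        intro j hj
        rw [Finset.mem_sdiff, hF_def, Finset.mem_filter] at hj
        intro hcontra
        have hzw : w = z j := (bl_eq_zero_iff (hz' j).le hw1).mp hcontra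
        exact hj.2 ⟨hj.1, hzw.symm⟩
    · -- eventual equality
      rw [hm]
      filter_upwards [isOpen_ball.mem_nhds hwr] with u hu
      rw [heq u hu]
      have hsplit : (∏ j ∈ Finset.range N, bl (z j) u)
          = (∏ j ∈ F, bl (z j) u) * ∏ j ∈ Finset.range N \ F, bl (z j) u := by
        rw [mul_comm, Finset.prod_sdiff hFsub]
      have hFprod : (∏ j ∈ F, bl (z j) u) = (u - w) ^ F.card * (e u) ^ F.card := by
        calc (∏ j ∈ F, bl (z j) u) = ∏ j ∈ F, ((u - w) * e u) := by
              apply Finset.prod_congr rfl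
              intro j hj
              rw [hF_def, Finset.mem_filter] at hj
              rw [hj.2, hble u]
          _ = ((u - w) * e u) ^ F.card := Finset.prod_const _
          _ = (u - w) ^ F.card * (e u) ^ F.card := mul_pow _ _ _
      rw [hsplit, hFprod, hg_def]
      ring
  -- nonconstant
  refine ⟨f, hdiff, hmaps, ?_, horder⟩
  have hw0 : z 0 ∈ ball (0:ℂ) 1 := hz 0
  obtain ⟨g, hg, hgw, hev⟩ := horder (z 0) hw0
  set w : ℂ := z 0
  set m : ℕ := {j | z j = w}.ncard with hm_def
  have hfin : {j | z j = w}.Finite := by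
    obtain ⟨r, hwr, hr1, N, S, hSdiff, hne, htendsto, heq⟩ := hrep w hw0
    apply Set.Finite.subset (Set.finite_Iio N)
    intro j hj
    simp only [mem_setOf_eq] at hj
    simp only [mem_Iio]
    by_contra hjN
    push_neg at hjN
    have := hne w hwr j hjN
    rw [hj] at this
    have hw1 : Complex.abs w < 1 := by
      rw [mem_ball_zero_iff, Complex.norm_eq_abs] at hw0; exact hw0
    exact this ((bl_eq_zero_iff hw1.le hw1).mpr rfl)
  have hm1 : 0 < m := by
    rw [hm_def]
    rw [Set.ncard_pos hfin]
    exact ⟨0, rfl⟩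
  have hfw : f w = 0 := by
    have := hev.self_of_nhds
    rw [this, sub_self, zero_pow (by omega), zero_mul]
  have hT : ∀ᶠ u in 𝓝 w, f u = (u - w) ^ m * g u ∧ g u ≠ 0 ∧ u ∈ ball (0:ℂ) 1 := by
    filter_upwards [hev, hg.continuousAt.eventually_ne hgw, isOpen_ball.mem_nhds hw0] with
      u h1 h2 h3
    exact ⟨h1, h2, h3⟩
  have : ∃ u, (f u = (u - w) ^ m * g u ∧ g u ≠ 0 ∧ u ∈ ball (0:ℂ) 1) ∧ u ≠ w := by
    have h2 : ∀ᶠ u in 𝓝[≠] w, (f u = (u - w) ^ m * g u ∧ g u ≠ 0 ∧ u ∈ ball (0:ℂ) 1) ∧ u ≠ w := by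
      refine Eventually.and (hT.filter_mono nhdsWithin_le_nhds) ?_
      exact eventually_mem_nhdsWithin
    exact h2.exists
  obtain ⟨u, ⟨hu1, hu2, hu3⟩, hu4⟩ := this
  refine ⟨u, hu3, w, hw0, ?_⟩
  rw [hfw, hu1]
  exact mul_ne_zero (pow_ne_zero _ (sub_ne_zero.mpr hu4)) hu2

end BlaschkeHelpers
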